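/- arXiv:1805.02776 — 3 statements merged into one kernel-verified Lean document; each statement's English description precedes it below -/
import Mathlib

section
/- Let n ≥ 1, s ∈ (0,1), p > 2, and let u ∈ C¹(ℝⁿ) with u ∈ L_{sp}(ℝⁿ) and |∇u| ∈ L_{sp}(ℝⁿ). Then for every x ∈ ℝⁿ and every index 1 ≤ i ≤ n, ∫_{|y|>1} [ |u(x)−u(x+y)|^{p−2} |∂_i u(x) − ∂_i u(x+y)| + |u(x)−u(x−y)|^{p−2} |∂_i u(x) − ∂_i u(x−y)| ] / |y|^{n+sp} dy < ∞. -/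
set_option maxHeartbeats 1000000
open MeasureTheory Set

lemma aux_mul_rpow {a b q : ℝ} (ha : 0 ≤ a) (hb : 0 ≤ b) (hq : 0 < q) :
    a ^ q * b ≤ a ^ (q+1) + b ^ (q+1) := by
  rcases le_total a b with h | h
  · rcases eq_or_lt_of_le hb with rfl | hb'
    · have : a = 0 := le_antisymm h ha
      simp [this, Real.zero_rpow hq.ne']
      positivity
    · calc a ^ q * b ≤ b ^ q * b := by gcongr
        _ = b ^ (q+1) := by rw [Real.rpow_add_one hb'.ne']
        _ ≤ _ := le_add_of_nonneg_left (Real.rpow_nonneg ha _)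
  · rcases eq_or_lt_of_le ha with rfl | ha'
    · simp [Real.zero_rpow hq.ne', le_antisymm h hb, Real.zero_rpow (by linarith : q+1 ≠ 0)]
    · calc a ^ q * b ≤ a ^ q * a := by gcongr
        _ = a ^ (q+1) := by rw [Real.rpow_add_one ha'.ne']
        _ ≤ _ := le_add_of_nonneg_right (Real.rpow_nonneg hb _)

lemma aux_add_rpow {a b r : ℝ} (ha : 0 ≤ a) (hb : 0 ≤ b) (hr : 0 ≤ r) :
    (a + b) ^ r ≤ 2 ^ r * (a ^ r + b ^ r) := by
  have hmax : 0 ≤ max a b := le_max_of_le_left ha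
  calc (a + b) ^ r ≤ (2 * max a b) ^ r := by
        apply Real.rpow_le_rpow (by linarith) (by rcases le_total a b with h|h <;> simp [h] <;> linarith) hr
    _ = 2 ^ r * (max a b) ^ r := Real.mul_rpow (by norm_num) hmax
    _ ≤ 2 ^ r * (a ^ r + b ^ r) := by
        gcongr
        rcases le_total a b with h|h
        · rw [max_eq_right h]; exact le_add_of_nonneg_left (Real.rpow_nonneg ha _)
        · rw [max_eq_left h]; exact le_add_of_nonneg_right (Real.rpow_nonneg hb _)

/-- let `n ≥ 1`, `s ∈ (0,1)`, `p > 2`, and `u ∈ C¹(ℝⁿ)` with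
`u ∈ L_{sp}(ℝⁿ)` and `|∇u| ∈ L_{sp}(ℝⁿ)`. Then for every `x` and every index `i`,
`∫_{|y|>1} [ |u(x)−u(x+y)|^{p−2}|∂ᵢu(x)−∂ᵢu(x+y)|
  + |u(x)−u(x−y)|^{p−2}|∂ᵢu(x)−∂ᵢu(x−y)| ] / |y|^{n+sp} dy < ∞`. -/
theorem stmt9 (n : ℕ) (hn : 1 ≤ n) (s p : ℝ) (hs : s ∈ Set.Ioo (0:ℝ) 1) (hp : 2 < p)
    (u : EuclideanSpace ℝ (Fin n) → ℝ) (hu : ContDiff ℝ 1 u)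
    (huloc : MeasureTheory.LocallyIntegrable u)
    (hutail : MeasureTheory.Integrable
      (fun x : EuclideanSpace ℝ (Fin n) => |u x| ^ (p-1) / (1 + ‖x‖) ^ ((n : ℝ) + s * p)))
    (hgloc : MeasureTheory.LocallyIntegrable (fun x : EuclideanSpace ℝ (Fin n) => ‖fderiv ℝ u x‖))
    (hgtail : MeasureTheory.Integrable
      (fun x : EuclideanSpace ℝ (Fin n) => ‖fderiv ℝ u x‖ ^ (p-1) / (1 + ‖x‖) ^ ((n : ℝ) + s * p)))
    (x : EuclideanSpace ℝ (Fin n)) (i : Fin n) :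
    MeasureTheory.IntegrableOn
      (fun y : EuclideanSpace ℝ (Fin n) =>
        ( |u x - u (x + y)| ^ (p-2) *
            |fderiv ℝ u x (EuclideanSpace.single i 1) - fderiv ℝ u (x + y) (EuclideanSpace.single i 1)|
        + |u x - u (x - y)| ^ (p-2) *
            |fderiv ℝ u x (EuclideanSpace.single i 1) - fderiv ℝ u (x - y) (EuclideanSpace.single i 1)| )
        / ‖y‖ ^ ((n : ℝ) + s * p))
      {y : EuclideanSpace ℝ (Fin n) | 1 < ‖y‖} := by
  obtain ⟨hs0, hs1⟩ := hs
  set τ : ℝ := (n : ℝ) + s * p with hτdef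
  have hnpos : (0:ℝ) < n := by exact_mod_cast Nat.lt_of_lt_of_le Nat.zero_lt_one hn
  have hτn : (n:ℝ) < τ := by nlinarith
  have hτpos : 0 < τ := lt_trans hnpos hτn
  have hp2 : 0 < p - 2 := by linarith
  have hp1 : 0 < p - 1 := by linarith
  set S : Set (EuclideanSpace ℝ (Fin n)) := {y | 1 < ‖y‖} with hSdef
  have hSopen : IsOpen S := isOpen_lt continuous_const continuous_norm
  have hSmeas : MeasurableSet S := hSopen.measurableSet
  set d : EuclideanSpace ℝ (Fin n) → ℝ :=
    fun z => fderiv ℝ u z (EuclideanSpace.single i 1) with hddef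
  have hDcont : Continuous (fderiv ℝ u) := hu.continuous_fderiv one_ne_zero
  have hdcont : Continuous d := hDcont.clm_apply continuous_const
  have hdbound : ∀ z, |d z| ≤ ‖fderiv ℝ u z‖ := by
    intro z
    calc |d z| = ‖fderiv ℝ u z (EuclideanSpace.single i (1:ℝ))‖ := (Real.norm_eq_abs _).symm
      _ ≤ ‖fderiv ℝ u z‖ * ‖EuclideanSpace.single i (1:ℝ)‖ := (fderiv ℝ u z).le_opNorm _
      _ = ‖fderiv ℝ u z‖ := by rw [EuclideanSpace.norm_single]; simp
  set h1 : EuclideanSpace ℝ (Fin n) → ℝ := fun z => |u z| ^ (p-1) / (1 + ‖z‖) ^ τ with hh1def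
  set h2 : EuclideanSpace ℝ (Fin n) → ℝ :=
    fun z => ‖fderiv ℝ u z‖ ^ (p-1) / (1 + ‖z‖) ^ τ with hh2def
  have hh1 : Integrable h1 := hutail
  have hh2 : Integrable h2 := hgtail
  have hh1nn : ∀ z, 0 ≤ h1 z := fun z => by
    apply div_nonneg (Real.rpow_nonneg (abs_nonneg _) _) (Real.rpow_nonneg (by positivity) _)
  have hh2nn : ∀ z, 0 ≤ h2 z := fun z => by
    apply div_nonneg (Real.rpow_nonneg (norm_nonneg _) _) (Real.rpow_nonneg (by positivity) _)
  set cx : ℝ := |u x| ^ (p-1) with hcx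
  set dx : ℝ := ‖fderiv ℝ u x‖ ^ (p-1) with hdx
  set K1 : ℝ := 2 ^ (p-1) * 2 ^ τ * (2 * (cx + dx)) with hK1
  set K2 : ℝ := 2 ^ (p-1) * (2 + ‖x‖) ^ τ with hK2
  set G : EuclideanSpace ℝ (Fin n) → ℝ := fun y =>
    K1 * (1 + ‖y‖) ^ (-τ) + K2 * (h1 (x+y) + h2 (x+y) + h1 (x-y) + h2 (x-y)) with hG
  have hGint : Integrable G := by
    apply Integrable.add
    · refine (integrable_one_add_norm ?_).const_mul K1
      rwa [finrank_euclideanSpace_fin]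
    · exact ((((hh1.comp_add_left x).add (hh2.comp_add_left x)).add
        (hh1.comp_sub_left x)).add (hh2.comp_sub_left x)).const_mul K2
  have hrc : ∀ q : ℝ, 0 < q → Continuous (fun t : ℝ => t ^ q) := fun q hq =>
    continuous_iff_continuousAt.2 fun t => Real.continuousAt_rpow_const t q (Or.inr hq.le)
  refine Integrable.mono' hGint.integrableOn ?_ ?_
  · apply ContinuousOn.aestronglyMeasurable ?_ hSmeas
    apply ContinuousOn.div
    · apply Continuous.continuousOn
      have c1 : Continuous fun y : EuclideanSpace ℝ (Fin n) =>
          |u x - u (x + y)| ^ (p-2) :=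
        (hrc _ hp2).comp ((continuous_const.sub
          (hu.continuous.comp (continuous_const.add continuous_id))).abs)
      have c2 : Continuous fun y : EuclideanSpace ℝ (Fin n) => |d x - d (x + y)| :=
        (continuous_const.sub (hdcont.comp (continuous_const.add continuous_id))).abs
      have c3 : Continuous fun y : EuclideanSpace ℝ (Fin n) =>
          |u x - u (x - y)| ^ (p-2) :=
        (hrc _ hp2).comp ((continuous_const.sub
          (hu.continuous.comp (continuous_const.sub continuous_id))).abs)
      have c4 : Continuous fun y : EuclideanSpace ℝ (Fin n) => |d x - d (x - y)| :=
        (continuous_const.sub (hdcont.comp (continuous_const.sub continuous_id))).abs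
      exact (c1.mul c2).add (c3.mul c4)
    · exact ((hrc τ hτpos).comp continuous_norm).continuousOn
    · intro y hy
      exact (Real.rpow_pos_of_pos (lt_trans one_pos hy) τ).ne'
  · rw [ae_restrict_iff' hSmeas]
    filter_upwards with y hy
    have hy1 : (1:ℝ) < ‖y‖ := hy
    have hy0 : (0:ℝ) < ‖y‖ := lt_trans one_pos hy1
    set N : ℝ := ‖y‖ ^ τ with hN
    have hNpos : 0 < N := Real.rpow_pos_of_pos hy0 τ
    set A1 : ℝ := |u x - u (x + y)| with hA1
    set B1 : ℝ := |d x - d (x + y)| with hB1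
    set A2 : ℝ := |u x - u (x - y)| with hA2
    set B2 : ℝ := |d x - d (x - y)| with hB2
    have hT1nn : 0 ≤ A1 ^ (p-2) * B1 :=
      mul_nonneg (Real.rpow_nonneg (abs_nonneg _) _) (abs_nonneg _)
    have hT2nn : 0 ≤ A2 ^ (p-2) * B2 :=
      mul_nonneg (Real.rpow_nonneg (abs_nonneg _) _) (abs_nonneg _)
    have hfnn : 0 ≤ (A1 ^ (p-2) * B1 + A2 ^ (p-2) * B2) / N :=
      div_nonneg (by linarith) hNpos.le
    rw [Real.norm_eq_abs, abs_of_nonneg hfnn, div_le_iff₀ hNpos]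
    have hq1 : p - 2 + 1 = p - 1 := by ring
    -- bound T1
    have hu1 : A1 ≤ |u x| + |u (x+y)| := abs_sub _ _
    have hd1 : B1 ≤ ‖fderiv ℝ u x‖ + ‖fderiv ℝ u (x+y)‖ :=
      le_trans (abs_sub _ _) (add_le_add (hdbound x) (hdbound (x+y)))
    have hu2 : A2 ≤ |u x| + |u (x-y)| := abs_sub _ _
    have hd2 : B2 ≤ ‖fderiv ℝ u x‖ + ‖fderiv ℝ u (x-y)‖ :=
      le_trans (abs_sub _ _) (add_le_add (hdbound x) (hdbound (x-y)))
    have bT1 : A1 ^ (p-2) * B1 ≤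
        2 ^ (p-1) * ((cx + |u (x+y)| ^ (p-1)) + (dx + ‖fderiv ℝ u (x+y)‖ ^ (p-1))) := by
      calc A1 ^ (p-2) * B1 ≤ A1 ^ (p-1) + B1 ^ (p-1) := by
            rw [← hq1]; exact aux_mul_rpow (abs_nonneg _) (abs_nonneg _) hp2
        _ ≤ (|u x| + |u (x+y)|) ^ (p-1) + (‖fderiv ℝ u x‖ + ‖fderiv ℝ u (x+y)‖) ^ (p-1) := by
            exact add_le_add (Real.rpow_le_rpow (abs_nonneg _) hu1 hp1.le)
              (Real.rpow_le_rpow (abs_nonneg _) hd1 hp1.le)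
        _ ≤ 2 ^ (p-1) * (cx + |u (x+y)| ^ (p-1))
            + 2 ^ (p-1) * (dx + ‖fderiv ℝ u (x+y)‖ ^ (p-1)) := by
            apply add_le_add
            · exact aux_add_rpow (abs_nonneg _) (abs_nonneg _) hp1.le
            · exact aux_add_rpow (norm_nonneg _) (norm_nonneg _) hp1.le
        _ = _ := by ring
    have bT2 : A2 ^ (p-2) * B2 ≤
        2 ^ (p-1) * ((cx + |u (x-y)| ^ (p-1)) + (dx + ‖fderiv ℝ u (x-y)‖ ^ (p-1))) := by
      calc A2 ^ (p-2) * B2 ≤ A2 ^ (p-1) + B2 ^ (p-1) := by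
            rw [← hq1]; exact aux_mul_rpow (abs_nonneg _) (abs_nonneg _) hp2
        _ ≤ (|u x| + |u (x-y)|) ^ (p-1) + (‖fderiv ℝ u x‖ + ‖fderiv ℝ u (x-y)‖) ^ (p-1) := by
            exact add_le_add (Real.rpow_le_rpow (abs_nonneg _) hu2 hp1.le)
              (Real.rpow_le_rpow (abs_nonneg _) hd2 hp1.le)
        _ ≤ 2 ^ (p-1) * (cx + |u (x-y)| ^ (p-1))
            + 2 ^ (p-1) * (dx + ‖fderiv ℝ u (x-y)‖ ^ (p-1)) := by
            apply add_le_add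
            · exact aux_add_rpow (abs_nonneg _) (abs_nonneg _) hp1.le
            · exact aux_add_rpow (norm_nonneg _) (norm_nonneg _) hp1.le
        _ = _ := by ring
    -- constant piece : 1 ≤ 2^τ * (1+‖y‖)^(-τ) * N
    have h1y : (0:ℝ) < 1 + ‖y‖ := by linarith
    have e0 : 1 ≤ 2 ^ τ * (1 + ‖y‖) ^ (-τ) * N := by
      have hle : (1 + ‖y‖) ^ τ ≤ 2 ^ τ * N := by
        rw [← Real.mul_rpow (by norm_num) hy0.le]
        exact Real.rpow_le_rpow h1y.le (by linarith) hτpos.le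
      have hpos : (0:ℝ) < (1 + ‖y‖) ^ τ := Real.rpow_pos_of_pos h1y τ
      rw [Real.rpow_neg h1y.le]
      rw [show 2 ^ τ * ((1 + ‖y‖) ^ τ)⁻¹ * N = (2 ^ τ * N) / (1 + ‖y‖) ^ τ by ring]
      rw [le_div_iff₀ hpos, one_mul]
      exact hle
    -- variable pieces
    have hxy : ∀ z : EuclideanSpace ℝ (Fin n), ‖z‖ ≤ ‖x‖ + ‖y‖ →
        (1 + ‖z‖) ^ τ ≤ (2 + ‖x‖) ^ τ * N := by
      intro z hz
      rw [← Real.mul_rpow (by positivity) hy0.le]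
      apply Real.rpow_le_rpow (by positivity) ?_ hτpos.le
      nlinarith [norm_nonneg x, norm_nonneg y]
    have key : ∀ (a : ℝ) (z : EuclideanSpace ℝ (Fin n)), 0 ≤ a → ‖z‖ ≤ ‖x‖ + ‖y‖ →
        a ^ (p-1) / (1 + ‖z‖) ^ τ * ((2 + ‖x‖) ^ τ * N) ≥ a ^ (p-1) := by
      intro a z ha hz
      have hpos : (0:ℝ) < (1 + ‖z‖) ^ τ := Real.rpow_pos_of_pos (by positivity) τ
      rw [ge_iff_le, div_mul_eq_mul_div, le_div_iff₀ hpos]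
      exact mul_le_mul_of_nonneg_left (hxy z hz) (Real.rpow_nonneg ha _)
    have e1 : |u (x+y)| ^ (p-1) ≤ h1 (x+y) * ((2 + ‖x‖) ^ τ * N) := by
      have := key |u (x+y)| (x+y) (abs_nonneg _) (norm_add_le x y)
      simpa [hh1def, mul_assoc] using this
    have e2 : ‖fderiv ℝ u (x+y)‖ ^ (p-1) ≤ h2 (x+y) * ((2 + ‖x‖) ^ τ * N) := by
      have := key ‖fderiv ℝ u (x+y)‖ (x+y) (norm_nonneg _) (norm_add_le x y)
      simpa [hh2def, mul_assoc] using this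
    have e3 : |u (x-y)| ^ (p-1) ≤ h1 (x-y) * ((2 + ‖x‖) ^ τ * N) := by
      have := key |u (x-y)| (x-y) (abs_nonneg _) (norm_sub_le x y)
      simpa [hh1def, mul_assoc] using this
    have e4 : ‖fderiv ℝ u (x-y)‖ ^ (p-1) ≤ h2 (x-y) * ((2 + ‖x‖) ^ τ * N) := by
      have := key ‖fderiv ℝ u (x-y)‖ (x-y) (norm_nonneg _) (norm_sub_le x y)
      simpa [hh2def, mul_assoc] using this
    have hcxnn : 0 ≤ cx := Real.rpow_nonneg (abs_nonneg _) _
    have hdxnn : 0 ≤ dx := Real.rpow_nonneg (norm_nonneg _) _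
    have hpow : (0:ℝ) < 2 ^ (p-1) := Real.rpow_pos_of_pos two_pos _
    have hxpow : (0:ℝ) ≤ (2 + ‖x‖) ^ τ := Real.rpow_nonneg (by positivity) _
    have econst : 2 * (cx + dx) ≤ 2 * (cx + dx) * (2 ^ τ * (1 + ‖y‖) ^ (-τ) * N) :=
      le_mul_of_one_le_right (by linarith) e0
    calc A1 ^ (p-2) * B1 + A2 ^ (p-2) * B2
        ≤ 2 ^ (p-1) * (2 * (cx + dx))
          + 2 ^ (p-1) * (|u (x+y)| ^ (p-1) + ‖fderiv ℝ u (x+y)‖ ^ (p-1)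
            + |u (x-y)| ^ (p-1) + ‖fderiv ℝ u (x-y)‖ ^ (p-1)) := by nlinarith [bT1, bT2]
      _ ≤ 2 ^ (p-1) * (2 * (cx + dx) * (2 ^ τ * (1 + ‖y‖) ^ (-τ) * N))
          + 2 ^ (p-1) * ((h1 (x+y) + h2 (x+y) + h1 (x-y) + h2 (x-y)) * ((2 + ‖x‖) ^ τ * N)) := by
          have hsum : |u (x+y)| ^ (p-1) + ‖fderiv ℝ u (x+y)‖ ^ (p-1)
                 + |u (x-y)| ^ (p-1) + ‖fderiv ℝ u (x-y)‖ ^ (p-1)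
                ≤ (h1 (x+y) + h2 (x+y) + h1 (x-y) + h2 (x-y)) * ((2 + ‖x‖) ^ τ * N) := by
            have hr : (h1 (x+y) + h2 (x+y) + h1 (x-y) + h2 (x-y)) * ((2 + ‖x‖) ^ τ * N)
                = h1 (x+y) * ((2 + ‖x‖) ^ τ * N) + h2 (x+y) * ((2 + ‖x‖) ^ τ * N)
                  + h1 (x-y) * ((2 + ‖x‖) ^ τ * N) + h2 (x-y) * ((2 + ‖x‖) ^ τ * N) := by ring
            rw [hr]
            linarith [e1, e2, e3, e4]
          exact add_le_add (mul_le_mul_of_nonneg_left econst hpow.le)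
            (mul_le_mul_of_nonneg_left hsum hpow.le)
      _ = G y * N := by rw [hG, hK1, hK2]; ring
end

section
/- Let n ≥ 1, p > 2, let x ∈ ℝⁿ, and let u be C³ on a neighborhood of the closed ball of radius 1 centered at x. Then for every index 1 ≤ i ≤ n there exists a constant C > 0 such that for all y ∈ ℝⁿ with 0 < |y| ≤ 1: | |u(x)−u(x+y)|^{p−2}(∂_i u(x) − ∂_i u(x+y)) + |u(x)−u(x−y)|^{p−2}(∂_i u(x) − ∂_i u(x−y)) | ≤ C (|y|^{2p−3} + |y|^p). -/
open MeasureTheory Set Metric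

private lemma lipOnBall {E F : Type*} [NormedAddCommGroup E] [NormedSpace ℝ E] [FiniteDimensional ℝ E]
    [NormedAddCommGroup F] [NormedSpace ℝ F]
    {f : E → F} {V : Set E} {x : E} (hV : IsOpen V) (hxV : closedBall x 1 ⊆ V)
    (hf : ContDiffOn ℝ 1 f V) :
    ∃ K : ℝ, 1 ≤ K ∧ ∀ a ∈ closedBall x 1, ∀ b ∈ closedBall x 1,
      ‖f a - f b‖ ≤ K * ‖a - b‖ := by
  have hcont : ContinuousOn (fderiv ℝ f) (closedBall x 1) :=
    (hf.continuousOn_fderiv_of_isOpen hV le_rfl).mono hxV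
  obtain ⟨K0, hK0⟩ := (isCompact_closedBall x 1).exists_bound_of_continuousOn hcont
  refine ⟨max K0 1, le_max_right _ _, fun a ha b hb => ?_⟩
  have hdiff : ∀ z ∈ closedBall x 1, DifferentiableAt ℝ f z := fun z hz =>
    (hf.contDiffAt (hV.mem_nhds (hxV hz))).differentiableAt one_ne_zero
  have hbound : ∀ z ∈ closedBall x 1, ‖fderiv ℝ f z‖ ≤ max K0 1 := fun z hz =>
    (hK0 z hz).trans (le_max_left _ _)
  exact (convex_closedBall x 1).norm_image_sub_le_of_norm_fderiv_le hdiff hbound hb ha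

private lemma secondOrder {E : Type*} [NormedAddCommGroup E] [NormedSpace ℝ E] [FiniteDimensional ℝ E]
    {f : E → ℝ} {V : Set E} {x : E} (hV : IsOpen V) (hxV : closedBall x 1 ⊆ V)
    (hf : ContDiffOn ℝ 2 f V) :
    ∃ M : ℝ, 1 ≤ M ∧ ∀ y : E, ‖y‖ ≤ 1 →
      |f (x + y) + f (x - y) - 2 * f x| ≤ M * ‖y‖ ^ 2 := by
  have hD : ContDiffOn ℝ 1 (fderiv ℝ f) V := hf.fderiv_of_isOpen hV (by norm_num)
  obtain ⟨K, hK1, hKlip⟩ := lipOnBall hV hxV hD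
  refine ⟨2 * K, by linarith, fun y hy => ?_⟩
  have hsub : closedBall x ‖y‖ ⊆ closedBall x 1 := closedBall_subset_closedBall hy
  set h : E → ℝ := fun z => f z - fderiv ℝ f x z with hh
  have hdf : ∀ z ∈ closedBall x ‖y‖, DifferentiableAt ℝ f z := fun z hz =>
    (hf.contDiffAt (hV.mem_nhds (hxV (hsub hz)))).differentiableAt (by norm_num)
  have hdiff : ∀ z ∈ closedBall x ‖y‖, DifferentiableAt ℝ h z := fun z hz =>
    (hdf z hz).sub (fderiv ℝ f x).differentiableAt
  have hbound : ∀ z ∈ closedBall x ‖y‖, ‖fderiv ℝ h z‖ ≤ K * ‖y‖ := by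
    intro z hz
    have : fderiv ℝ h z = fderiv ℝ f z - fderiv ℝ f x := by
      rw [hh]
      rw [fderiv_fun_sub (hdf z hz) (fderiv ℝ f x).differentiableAt,
        (fderiv ℝ f x).fderiv]
    rw [this]
    have h1 : ‖fderiv ℝ f z - fderiv ℝ f x‖ ≤ K * ‖z - x‖ :=
      hKlip z (hsub hz) x (mem_closedBall_self zero_le_one)
    have h2 : ‖z - x‖ ≤ ‖y‖ := by
      rw [← dist_eq_norm]; exact mem_closedBall.1 hz
    nlinarith [norm_nonneg (fderiv ℝ f z - fderiv ℝ f x)]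
  have hmem1 : x + y ∈ closedBall x ‖y‖ := by
    simp [mem_closedBall, dist_eq_norm]
  have hmem2 : x - y ∈ closedBall x ‖y‖ := by
    simp [mem_closedBall, dist_eq_norm]
  have hmemx : x ∈ closedBall x ‖y‖ := mem_closedBall_self (norm_nonneg y)
  have e1 : ‖h (x + y) - h x‖ ≤ K * ‖y‖ * ‖(x + y) - x‖ :=
    (convex_closedBall x ‖y‖).norm_image_sub_le_of_norm_fderiv_le hdiff hbound hmemx hmem1
  have e2 : ‖h (x - y) - h x‖ ≤ K * ‖y‖ * ‖(x - y) - x‖ :=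
    (convex_closedBall x ‖y‖).norm_image_sub_le_of_norm_fderiv_le hdiff hbound hmemx hmem2
  have hn1 : ‖(x + y) - x‖ = ‖y‖ := by rw [add_sub_cancel_left]
  have hn2 : ‖(x - y) - x‖ = ‖y‖ := by
    rw [sub_sub_cancel_left, norm_neg]
  rw [hn1] at e1; rw [hn2] at e2
  have hmap : fderiv ℝ f x (x + y) + fderiv ℝ f x (x - y)
      = fderiv ℝ f x x + fderiv ℝ f x x := by
    rw [← map_add, ← map_add]; congr 1; abel
  have key : f (x + y) + f (x - y) - 2 * f x
      = (h (x + y) - h x) + (h (x - y) - h x) := by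
    simp only [hh]; linarith [hmap]
  rw [key]
  calc |(h (x + y) - h x) + (h (x - y) - h x)|
      ≤ |h (x + y) - h x| + |h (x - y) - h x| := abs_add_le _ _
    _ ≤ K * ‖y‖ * ‖y‖ + K * ‖y‖ * ‖y‖ := by
        rw [← Real.norm_eq_abs, ← Real.norm_eq_abs]; exact add_le_add e1 e2
    _ = 2 * K * ‖y‖ ^ 2 := by ring

private lemma rpow_sub_rpow_le_big {q s t R : ℝ} (hq : 1 ≤ q) (hs : 0 ≤ s) (hsR : s ≤ R)
    (ht : 0 ≤ t) (htR : t ≤ R) : |s ^ q - t ^ q| ≤ q * R ^ (q - 1) * |s - t| := by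
  have hdiff : ∀ r ∈ Icc (0:ℝ) R, DifferentiableAt ℝ (fun r : ℝ => r ^ q) r := fun r _ =>
    (Real.hasDerivAt_rpow_const (Or.inr hq)).differentiableAt
  have hbound : ∀ r ∈ Icc (0:ℝ) R, ‖deriv (fun r : ℝ => r ^ q) r‖ ≤ q * R ^ (q - 1) := by
    intro r hr
    rw [(Real.hasDerivAt_rpow_const (p := q) (Or.inr hq)).deriv, Real.norm_eq_abs, abs_mul,
      abs_of_nonneg (by linarith : (0:ℝ) ≤ q),
      abs_of_nonneg (Real.rpow_nonneg hr.1 _)]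
    exact mul_le_mul_of_nonneg_left
      (Real.rpow_le_rpow hr.1 hr.2 (by linarith)) (by linarith)
  have := (convex_Icc (0:ℝ) R).norm_image_sub_le_of_norm_deriv_le hdiff hbound
    ⟨ht, htR⟩ ⟨hs, hsR⟩
  simpa [Real.norm_eq_abs] using this

private lemma rpow_sub_rpow_le_small {q s t : ℝ} (hq0 : 0 < q) (hq1 : q ≤ 1)
    (hs : 0 ≤ s) (ht : 0 ≤ t) : |s ^ q - t ^ q| ≤ |s - t| ^ q := by
  rcases le_total t s with h | h
  · have h1 : s ^ q ≤ (s - t) ^ q + t ^ q := by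
      have key := NNReal.rpow_add_le_add_rpow (Real.toNNReal (s - t)) (Real.toNNReal t)
        hq0.le hq1
      have h2 : Real.toNNReal (s - t) + Real.toNNReal t = Real.toNNReal s := by
        rw [← Real.toNNReal_add (by linarith) ht]; congr 1; ring
      rw [h2] at key
      have key2 := NNReal.coe_le_coe.2 key
      push_cast at key2
      rwa [Real.coe_toNNReal _ hs, Real.coe_toNNReal _ (by linarith),
        Real.coe_toNNReal _ ht] at key2
    have h2 : t ^ q ≤ s ^ q := Real.rpow_le_rpow ht h hq0.le
    rw [abs_of_nonneg (by linarith : (0:ℝ) ≤ s ^ q - t ^ q),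
      abs_of_nonneg (by linarith : (0:ℝ) ≤ s - t)]
    linarith
  · have h1 : t ^ q ≤ (t - s) ^ q + s ^ q := by
      have key := NNReal.rpow_add_le_add_rpow (Real.toNNReal (t - s)) (Real.toNNReal s)
        hq0.le hq1
      have h2 : Real.toNNReal (t - s) + Real.toNNReal s = Real.toNNReal t := by
        rw [← Real.toNNReal_add (by linarith) hs]; congr 1; ring
      rw [h2] at key
      have key2 := NNReal.coe_le_coe.2 key
      push_cast at key2
      rwa [Real.coe_toNNReal _ ht, Real.coe_toNNReal _ (by linarith),
        Real.coe_toNNReal _ hs] at key2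
    have h2 : s ^ q ≤ t ^ q := Real.rpow_le_rpow hs h hq0.le
    rw [abs_sub_comm, abs_sub_comm s t,
      abs_of_nonneg (by linarith : (0:ℝ) ≤ t ^ q - s ^ q),
      abs_of_nonneg (by linarith : (0:ℝ) ≤ t - s)]
    linarith

/-- let `n ≥ 1`, `p > 2`, `x ∈ ℝⁿ` and let `u` be `C³` on a neighborhood of
`closedBall x 1`. Then for every index `i` there is `C > 0` such that for all `0 < |y| ≤ 1`:
`| |u(x)−u(x+y)|^{p−2}(∂ᵢu(x)−∂ᵢu(x+y)) + |u(x)−u(x−y)|^{p−2}(∂ᵢu(x)−∂ᵢu(x−y)) |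
  ≤ C (|y|^{2p−3} + |y|^p)`. -/
theorem stmt10 (n : ℕ) (hn : 1 ≤ n) (p : ℝ) (hp : 2 < p)
    (x : EuclideanSpace ℝ (Fin n)) (u : EuclideanSpace ℝ (Fin n) → ℝ)
    (V : Set (EuclideanSpace ℝ (Fin n))) (hV : IsOpen V) (hxV : Metric.closedBall x 1 ⊆ V)
    (hu : ContDiffOn ℝ 3 u V) (i : Fin n) :
    ∃ C : ℝ, 0 < C ∧ ∀ y : EuclideanSpace ℝ (Fin n), 0 < ‖y‖ → ‖y‖ ≤ 1 →
      abs ( |u x - u (x + y)| ^ (p-2) *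
          (fderiv ℝ u x (EuclideanSpace.single i 1) - fderiv ℝ u (x + y) (EuclideanSpace.single i 1))
      + |u x - u (x - y)| ^ (p-2) *
          (fderiv ℝ u x (EuclideanSpace.single i 1) - fderiv ℝ u (x - y) (EuclideanSpace.single i 1)) )
      ≤ C * (‖y‖ ^ (2*p - 3) + ‖y‖ ^ p) := by
  set q : ℝ := p - 2 with hqdef
  have hq : 0 < q := by simp [hqdef]; linarith
  set g : EuclideanSpace ℝ (Fin n) → ℝ :=
    fun z => fderiv ℝ u z (EuclideanSpace.single i 1) with hg
  have hu2 : ContDiffOn ℝ 2 u V := hu.of_le (by norm_num)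
  have hu1 : ContDiffOn ℝ 1 u V := hu.of_le (by norm_num)
  have hD : ContDiffOn ℝ 2 (fderiv ℝ u) V := hu.fderiv_of_isOpen hV (by norm_num)
  have hg2 : ContDiffOn ℝ 2 g V := hD.clm_apply contDiffOn_const
  have hg1 : ContDiffOn ℝ 1 g V := hg2.of_le (by norm_num)
  obtain ⟨L, hL1, hLlip⟩ := lipOnBall hV hxV hu1
  obtain ⟨K, hK1, hKlip⟩ := lipOnBall hV hxV hg1
  obtain ⟨M1, hM11, hM1⟩ := secondOrder hV hxV hu2
  obtain ⟨M2, hM21, hM2⟩ := secondOrder hV hxV hg2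
  have hL0 : (0:ℝ) < L := by linarith
  have hK0 : (0:ℝ) < K := by linarith
  have hM10 : (0:ℝ) < M1 := by linarith
  have hM20 : (0:ℝ) < M2 := by linarith
  refine ⟨L ^ q * M2 + M1 ^ q * K + q * L ^ (q - 1) * M1 * K, by positivity, ?_⟩
  intro y hy0 hy1
  have hxy : x + y ∈ closedBall x 1 := by
    simp only [mem_closedBall, dist_eq_norm, add_sub_cancel_left]; exact hy1
  have hxy' : x - y ∈ closedBall x 1 := by
    simp only [mem_closedBall, dist_eq_norm, sub_sub_cancel_left, norm_neg]; exact hy1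
  have hxm : x ∈ closedBall x 1 := mem_closedBall_self zero_le_one
  set s : ℝ := |u x - u (x + y)| with hs_def
  set t : ℝ := |u x - u (x - y)| with ht_def
  set Bp : ℝ := g x - g (x + y) with hBp_def
  set Bm : ℝ := g x - g (x - y) with hBm_def
  have hs0 : 0 ≤ s := abs_nonneg _
  have ht0 : 0 ≤ t := abs_nonneg _
  have hsL : s ≤ L * ‖y‖ := by
    have := hLlip x hxm (x + y) hxy
    rwa [Real.norm_eq_abs, show x - (x + y) = -y by abel, norm_neg] at this
  have htL : t ≤ L * ‖y‖ := by
    have := hLlip x hxm (x - y) hxy'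
    rwa [Real.norm_eq_abs, show x - (x - y) = y by abel] at this
  have hBm_bd : |Bm| ≤ K * ‖y‖ := by
    have := hKlip x hxm (x - y) hxy'
    rwa [Real.norm_eq_abs, show x - (x - y) = y by abel] at this
  have hBsum : |Bp + Bm| ≤ M2 * ‖y‖ ^ 2 := by
    have h1 := hM2 y hy1
    have h2 : Bp + Bm = -(g (x + y) + g (x - y) - 2 * g x) := by
      rw [hBp_def, hBm_def]; ring
    rw [h2, abs_neg]; exact h1
  have hst : |s - t| ≤ M1 * ‖y‖ ^ 2 := by
    have h1 := hM1 y hy1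
    have h2 : |s - t| ≤ |(u x - u (x + y)) + (u x - u (x - y))| := by
      have h := abs_abs_sub_abs_le_abs_sub (u x - u (x + y)) (-(u x - u (x - y)))
      rw [abs_neg, sub_neg_eq_add] at h
      rw [hs_def, ht_def]
      exact h
    have h3 : (u x - u (x + y)) + (u x - u (x - y))
        = -(u (x + y) + u (x - y) - 2 * u x) := by ring
    rw [h3, abs_neg] at h2
    exact h2.trans h1
  -- norm powers as rpow
  have hyq : (0:ℝ) < ‖y‖ := hy0
  have hy2 : (‖y‖ : ℝ) ^ (2:ℕ) = ‖y‖ ^ ((2:ℝ)) := by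
    rw [← Real.rpow_natCast ‖y‖ 2]; norm_num
  show |s ^ q * Bp + t ^ q * Bm| ≤ _
  have key : s ^ q * Bp + t ^ q * Bm = s ^ q * (Bp + Bm) + (t ^ q - s ^ q) * Bm := by ring
  have tri : |s ^ q * Bp + t ^ q * Bm|
      ≤ s ^ q * |Bp + Bm| + |s ^ q - t ^ q| * |Bm| := by
    rw [key]
    calc |s ^ q * (Bp + Bm) + (t ^ q - s ^ q) * Bm|
        ≤ |s ^ q * (Bp + Bm)| + |(t ^ q - s ^ q) * Bm| := abs_add_le _ _
      _ = s ^ q * |Bp + Bm| + |s ^ q - t ^ q| * |Bm| := by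
          rw [abs_mul, abs_mul, abs_of_nonneg (Real.rpow_nonneg hs0 q), abs_sub_comm]
  -- Term 1
  have hsq : s ^ q ≤ L ^ q * ‖y‖ ^ q := by
    rw [← Real.mul_rpow hL0.le (norm_nonneg y)]
    exact Real.rpow_le_rpow hs0 hsL hq.le
  have term1 : s ^ q * |Bp + Bm| ≤ (L ^ q * M2) * ‖y‖ ^ p := by
    have h1 : s ^ q * |Bp + Bm| ≤ (L ^ q * ‖y‖ ^ q) * (M2 * ‖y‖ ^ (2:ℕ)) :=
      mul_le_mul hsq hBsum (abs_nonneg _) (by positivity)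
    have h2 : (L ^ q * ‖y‖ ^ q) * (M2 * ‖y‖ ^ (2:ℕ)) = (L ^ q * M2) * ‖y‖ ^ p := by
      rw [hy2, show p = q + 2 by rw [hqdef]; ring, Real.rpow_add hyq]; ring
    rw [h2] at h1; exact h1
  -- Term 2
  have term2 : |s ^ q - t ^ q| * |Bm|
      ≤ (M1 ^ q * K) * ‖y‖ ^ (2*p - 3) + (q * L ^ (q - 1) * M1 * K) * ‖y‖ ^ p := by
    rcases le_or_gt q 1 with hq1 | hq1
    · have h1 : |s ^ q - t ^ q| ≤ (M1 * ‖y‖ ^ (2:ℕ)) ^ q :=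
        (rpow_sub_rpow_le_small hq hq1 hs0 ht0).trans
          (Real.rpow_le_rpow (abs_nonneg _) hst hq.le)
      have h2 : |s ^ q - t ^ q| * |Bm| ≤ (M1 * ‖y‖ ^ (2:ℕ)) ^ q * (K * ‖y‖) :=
        mul_le_mul h1 hBm_bd (abs_nonneg _) (Real.rpow_nonneg (by positivity) _)
      have h3 : (M1 * ‖y‖ ^ (2:ℕ)) ^ q * (K * ‖y‖) = (M1 ^ q * K) * ‖y‖ ^ (2*p - 3) := by
        rw [hy2, Real.mul_rpow hM10.le (Real.rpow_nonneg (norm_nonneg y) _),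
          ← Real.rpow_mul (norm_nonneg y),
          show 2*p - 3 = 2*q + 1 by rw [hqdef]; ring, Real.rpow_add hyq, Real.rpow_one]
        ring
      have h4 : (0:ℝ) ≤ (q * L ^ (q - 1) * M1 * K) * ‖y‖ ^ p := by positivity
      rw [h3] at h2; linarith
    · have hR0 : 0 ≤ L * ‖y‖ := by positivity
      have h1 : |s ^ q - t ^ q| ≤ q * (L * ‖y‖) ^ (q - 1) * |s - t| :=
        rpow_sub_rpow_le_big hq1.le hs0 hsL ht0 htL
      have h2 : |s ^ q - t ^ q| * |Bm|
          ≤ (q * (L * ‖y‖) ^ (q - 1) * (M1 * ‖y‖ ^ (2:ℕ))) * (K * ‖y‖) := by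
        apply mul_le_mul _ hBm_bd (abs_nonneg _) (by positivity)
        exact h1.trans (mul_le_mul_of_nonneg_left hst (by positivity))
      have h3 : (q * (L * ‖y‖) ^ (q - 1) * (M1 * ‖y‖ ^ (2:ℕ))) * (K * ‖y‖)
          = (q * L ^ (q - 1) * M1 * K) * ‖y‖ ^ p := by
        rw [Real.mul_rpow hL0.le (norm_nonneg y), hy2,
          show p = (q - 1) + 2 + 1 by rw [hqdef]; ring,
          Real.rpow_add hyq, Real.rpow_add hyq, Real.rpow_one]
        ring
      have h4 : (0:ℝ) ≤ (M1 ^ q * K) * ‖y‖ ^ (2*p - 3) := by positivity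
      rw [h3] at h2; linarith
  have hy23 : (0:ℝ) ≤ ‖y‖ ^ (2*p - 3) := Real.rpow_nonneg (norm_nonneg y) _
  have hyp : (0:ℝ) ≤ ‖y‖ ^ p := Real.rpow_nonneg (norm_nonneg y) _
  have hfin := (tri.trans (add_le_add term1 term2))
  nlinarith [hfin, mul_nonneg (mul_nonneg hL0.le hM20.le) hy23,
    mul_nonneg (Real.rpow_nonneg hM10.le q) hyp,
    Real.rpow_nonneg hL0.le q, Real.rpow_nonneg hM10.le q,
    Real.rpow_nonneg hL0.le (q-1),
    mul_nonneg (Real.rpow_nonneg hL0.le q) hM20.le,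
    mul_nonneg (mul_nonneg (Real.rpow_nonneg hM10.le q) hK0.le) hy23,
    mul_nonneg (mul_nonneg (mul_nonneg hq.le (Real.rpow_nonneg hL0.le (q-1))) hM10.le) hK0.le]
end

section
/- Let s ∈ (0,1) and 2 < p < 3/(2−s). Then there exists a constant C > 0 such that for all x ∈ (0, 1/8): ∫₀^{1/2} (|y−2x|^{p−2} − (y+2x)^{p−2}) / y^{2+sp−p} dy ≤ −C x^{2p−sp−3}. In particular, since 2p − sp − 3 < 0, this integral tends to −∞ as x → 0⁺. -/
open MeasureTheory Set Filter

/-- Concavity bound: for `0 < q < 1` and `0 < B ≤ A`, `A^q - B^q ≤ B^(q-1) * (A-B)`. -/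
lemma stmt14_aux_rpow_sub {q A B : ℝ} (hq0 : 0 < q) (hq1 : q < 1) (hB : 0 < B) (hBA : B ≤ A) :
    A ^ q - B ^ q ≤ B ^ (q - 1) * (A - B) := by
  rcases eq_or_lt_of_le hBA with rfl | h
  · simp
  · have hc := (Real.concaveOn_rpow hq0.le hq1.le).slope_anti_adjacent
      (Set.mem_Ici.mpr le_rfl) (Set.mem_Ici.mpr (hB.le.trans hBA)) hB h
    simp only [Real.zero_rpow hq0.ne', sub_zero] at hc
    have h2 : B ^ q / B = B ^ (q - 1) := by rw [Real.rpow_sub_one hB.ne']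
    calc A ^ q - B ^ q = ((A ^ q - B ^ q) / (A - B)) * (A - B) :=
        (div_mul_cancel₀ _ (sub_ne_zero.mpr (ne_of_gt h))).symm
      _ ≤ (B ^ q / B) * (A - B) := mul_le_mul_of_nonneg_right hc (by linarith)
      _ = B ^ (q - 1) * (A - B) := by rw [h2]

/-- For `s ∈ (0,1)` and `2 < p < 3/(2−s)`, there is `C > 0` with
`∫₀^{1/2} (|y−2x|^{p−2} − (y+2x)^{p−2}) / y^{2+sp−p} dy ≤ −C x^{2p−sp−3}` for all
`x ∈ (0,1/8)`; since `2p − sp − 3 < 0`, the integral tends to `−∞` as `x → 0⁺`. -/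
theorem stmt14 (p s : ℝ) (hs : s ∈ Set.Ioo (0:ℝ) 1) (hp : 2 < p) (hp' : p < 3/(2-s)) :
    (∃ C : ℝ, 0 < C ∧ ∀ x ∈ Set.Ioo (0:ℝ) (1/8),
      (∫ y in Set.Ioc (0:ℝ) (1/2),
          (|y - 2*x| ^ (p-2) - (y + 2*x) ^ (p-2)) / y ^ (2 + s*p - p))
        ≤ -C * x ^ (2*p - s*p - 3)) ∧
    2*p - s*p - 3 < 0 ∧
    Filter.Tendsto (fun x : ℝ =>
        ∫ y in Set.Ioc (0:ℝ) (1/2),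
          (|y - 2*x| ^ (p-2) - (y + 2*x) ^ (p-2)) / y ^ (2 + s*p - p))
      (nhdsWithin 0 (Set.Ioi 0)) Filter.atBot := by
  obtain ⟨hs0, hs1⟩ := hs
  have h2s : (0:ℝ) < 2 - s := by linarith
  have hkey : p * (2 - s) < 3 := (lt_div_iff₀ h2s).mp hp'
  have hq0 : 0 < p - 2 := by linarith
  have hq1 : p - 2 < 1 := by nlinarith
  have ha1 : 1 < 2 + s*p - p := by nlinarith
  have ha2 : 2 + s*p - p < 2 := by nlinarith
  have he_neg : 2*p - s*p - 3 < 0 := by nlinarith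
  set C : ℝ := ((3:ℝ) ^ (p-2) - 1) / (2:ℝ) ^ (2 + s*p - p) with hCdef
  have hC : 0 < C := by
    apply div_pos
    · have : (1:ℝ) < (3:ℝ) ^ (p-2) :=
        (Real.one_lt_rpow_iff_of_pos (by norm_num)).mpr (Or.inl ⟨by norm_num, hq0⟩)
      linarith
    · exact Real.rpow_pos_of_pos (by norm_num) _
  -- main bound
  have hmain : ∀ x ∈ Set.Ioo (0:ℝ) (1/8),
      (∫ y in Set.Ioc (0:ℝ) (1/2),
          (|y - 2*x| ^ (p-2) - (y + 2*x) ^ (p-2)) / y ^ (2 + s*p - p))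
        ≤ -C * x ^ (2*p - s*p - 3) := by
    rintro x ⟨hx0, hx8⟩
    set F : ℝ → ℝ := fun y => (|y - 2*x| ^ (p-2) - (y + 2*x) ^ (p-2)) / y ^ (2 + s*p - p)
      with hFdef
    have hFc : ContinuousOn F (Set.Ioi 0) := by
      apply ContinuousOn.div
      · apply ContinuousOn.sub
        · exact (((continuous_id.sub continuous_const).abs).rpow_const
            (fun y => Or.inr hq0.le)).continuousOn
        · exact ((continuous_id.add continuous_const).rpow_const
            (fun y => Or.inr hq0.le)).continuousOn
      · intro y hy
        exact (Real.continuousAt_rpow_const y _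
          (Or.inl (ne_of_gt hy))).continuousWithinAt
      · intro y hy
        exact (Real.rpow_pos_of_pos hy _).ne'
    -- F is nonpositive for y > 0
    have hFnp : ∀ y : ℝ, 0 < y → F y ≤ 0 := by
      intro y hy
      have h1 : |y - 2*x| ≤ y + 2*x := abs_le.mpr ⟨by linarith, by linarith⟩
      have h2 : |y - 2*x| ^ (p-2) ≤ (y + 2*x) ^ (p-2) :=
        Real.rpow_le_rpow (abs_nonneg _) h1 hq0.le
      exact div_nonpos_of_nonpos_of_nonneg (by linarith) (Real.rpow_pos_of_pos hy _).le
    -- Integrability on (0, x]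
    have hInt1 : IntegrableOn F (Set.Ioc 0 x) := by
      have hg : IntegrableOn (fun y : ℝ => 2 * x ^ (p-3) * y ^ (1 - (2 + s*p - p)))
          (Set.Ioc 0 x) := by
        have := intervalIntegral.intervalIntegrable_rpow'
          (a := 0) (b := x) (r := 1 - (2 + s*p - p)) (by linarith)
        exact ((intervalIntegrable_iff_integrableOn_Ioc_of_le hx0.le).mp this).const_mul _
      refine Integrable.mono' hg
        ((hFc.mono (fun y hy => hy.1)).aestronglyMeasurable measurableSet_Ioc) ?_
      filter_upwards [ae_restrict_mem measurableSet_Ioc] with y hy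
      obtain ⟨hy0, hyx⟩ := hy
      have habs : |y - 2*x| = 2*x - y := by
        rw [abs_of_neg (by linarith : y - 2*x < 0)]; ring
      have hBpos : (0:ℝ) < 2*x - y := by linarith
      have hnum : (y + 2*x) ^ (p-2) - (2*x - y) ^ (p-2) ≤ x ^ (p-3) * (2*y) := by
        have h1 := stmt14_aux_rpow_sub hq0 hq1 hBpos (by linarith : 2*x - y ≤ y + 2*x)
        have h2 : (2*x - y) ^ (p-2-1) ≤ x ^ (p-2-1) :=
          Real.rpow_le_rpow_of_nonpos hx0 (by linarith) (by linarith)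
        have h3 : (y + 2*x) - (2*x - y) = 2*y := by ring
        rw [h3] at h1
        calc (y + 2*x) ^ (p-2) - (2*x - y) ^ (p-2) ≤ (2*x - y) ^ (p-2-1) * (2*y) := h1
          _ ≤ x ^ (p-2-1) * (2*y) := mul_le_mul_of_nonneg_right h2 (by linarith)
          _ = x ^ (p-3) * (2*y) := by rw [show p-2-1 = p-3 by ring]
      have hya : (0:ℝ) < y ^ (2 + s*p - p) := Real.rpow_pos_of_pos hy0 _
      have hnorm : ‖F y‖ = ((y + 2*x) ^ (p-2) - (2*x - y) ^ (p-2)) / y ^ (2 + s*p - p) := by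
        rw [Real.norm_eq_abs, abs_of_nonpos (hFnp y hy0), hFdef]
        simp only [habs]
        field_simp
        ring
      rw [hnorm]
      have hy1a : y ^ (1 - (2 + s*p - p)) = y / y ^ (2 + s*p - p) := by
        rw [Real.rpow_sub hy0, Real.rpow_one]
      calc ((y + 2*x) ^ (p-2) - (2*x - y) ^ (p-2)) / y ^ (2 + s*p - p)
          ≤ (x ^ (p-3) * (2*y)) / y ^ (2 + s*p - p) := by gcongr
        _ = 2 * x ^ (p-3) * y ^ (1 - (2 + s*p - p)) := by rw [hy1a]; ring
    -- Integrability on (x, 1/2]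
    have hInt2 : IntegrableOn F (Set.Ioc x (1/2)) := by
      have hcont : ContinuousOn F (Set.Icc x (1/2)) :=
        hFc.mono (fun y hy => lt_of_lt_of_le hx0 hy.1)
      exact (hcont.integrableOn_compact isCompact_Icc).mono_set Set.Ioc_subset_Icc_self
    have hInt : IntegrableOn F (Set.Ioc 0 (1/2)) := by
      rw [← Set.Ioc_union_Ioc_eq_Ioc hx0.le (by linarith : x ≤ 1/2)]
      exact hInt1.union hInt2
    -- restrict integral to (x, 2x]
    have hsub : Set.Ioc x (2*x) ⊆ Set.Ioc (0:ℝ) (1/2) :=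
      Set.Ioc_subset_Ioc hx0.le (by linarith)
    have hstep1 : (∫ y in Set.Ioc (0:ℝ) (1/2), F y) ≤ ∫ y in Set.Ioc x (2*x), F y := by
      have hneg : (∫ y in Set.Ioc x (2*x), -F y) ≤ ∫ y in Set.Ioc (0:ℝ) (1/2), -F y := by
        apply setIntegral_mono_set hInt.neg
        · filter_upwards [ae_restrict_mem measurableSet_Ioc] with y hy
          exact neg_nonneg.mpr (hFnp y hy.1)
        · exact Filter.Eventually.of_forall hsub
      simp only [integral_neg] at hneg
      linarith
    -- pointwise bound on (x, 2x]
    have hcb : ∀ y ∈ Set.Ioc x (2*x),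
        F y ≤ (x ^ (p-2) - (3*x) ^ (p-2)) / (2*x) ^ (2 + s*p - p) := by
      rintro y ⟨hxy, hy2x⟩
      have hy0 : 0 < y := hx0.trans hxy
      have habs : |y - 2*x| = 2*x - y := by
        rw [abs_of_nonpos (by linarith : y - 2*x ≤ 0)]; ring
      have h1 : (2*x - y) ^ (p-2) ≤ x ^ (p-2) :=
        Real.rpow_le_rpow (by linarith) (by linarith) hq0.le
      have h2 : (3*x) ^ (p-2) ≤ (y + 2*x) ^ (p-2) :=
        Real.rpow_le_rpow (by linarith) (by linarith) hq0.le
      have hya : (0:ℝ) < y ^ (2 + s*p - p) := Real.rpow_pos_of_pos hy0 _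
      have h2xa : y ^ (2 + s*p - p) ≤ (2*x) ^ (2 + s*p - p) :=
        Real.rpow_le_rpow hy0.le (by linarith) (by linarith)
      have hN : (0:ℝ) ≤ (3*x) ^ (p-2) - x ^ (p-2) := by
        have : x ^ (p-2) ≤ (3*x) ^ (p-2) :=
          Real.rpow_le_rpow hx0.le (by linarith) hq0.le
        linarith
      have step1 : F y ≤ (x ^ (p-2) - (3*x) ^ (p-2)) / y ^ (2 + s*p - p) := by
        rw [hFdef]
        simp only [habs]
        gcongr <;> linarith [hya.le]
      have step2 : ((3*x) ^ (p-2) - x ^ (p-2)) / (2*x) ^ (2 + s*p - p)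
          ≤ ((3*x) ^ (p-2) - x ^ (p-2)) / y ^ (2 + s*p - p) :=
        div_le_div_of_nonneg_left hN hya h2xa
      have e1 : (x ^ (p-2) - (3*x) ^ (p-2)) / y ^ (2 + s*p - p)
          = -(((3*x) ^ (p-2) - x ^ (p-2)) / y ^ (2 + s*p - p)) := by ring
      have e2 : (x ^ (p-2) - (3*x) ^ (p-2)) / (2*x) ^ (2 + s*p - p)
          = -(((3*x) ^ (p-2) - x ^ (p-2)) / (2*x) ^ (2 + s*p - p)) := by ring
      rw [e2]; rw [e1] at step1; linarith
    have hstep2 : (∫ y in Set.Ioc x (2*x), F y)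
        ≤ x * ((x ^ (p-2) - (3*x) ^ (p-2)) / (2*x) ^ (2 + s*p - p)) := by
      have hInt' : IntegrableOn F (Set.Ioc x (2*x)) := hInt.mono_set hsub
      have hconst : IntegrableOn
          (fun _ : ℝ => (x ^ (p-2) - (3*x) ^ (p-2)) / (2*x) ^ (2 + s*p - p))
          (Set.Ioc x (2*x)) := integrableOn_const measure_Ioc_lt_top.ne
      calc (∫ y in Set.Ioc x (2*x), F y)
          ≤ ∫ _ in Set.Ioc x (2*x),
              (x ^ (p-2) - (3*x) ^ (p-2)) / (2*x) ^ (2 + s*p - p) :=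
            setIntegral_mono_on hInt' hconst measurableSet_Ioc hcb
        _ = x * ((x ^ (p-2) - (3*x) ^ (p-2)) / (2*x) ^ (2 + s*p - p)) := by
            rw [setIntegral_const, measureReal_def, Real.volume_Ioc, smul_eq_mul,
              ENNReal.toReal_ofReal (by linarith : (0:ℝ) ≤ 2*x - x)]
            ring
    -- algebraic identity
    have hne1 : x ^ (2 + s*p - p) ≠ 0 := (Real.rpow_pos_of_pos hx0 _).ne'
    have hne2 : (2:ℝ) ^ (2 + s*p - p) ≠ 0 := (Real.rpow_pos_of_pos (by norm_num) _).ne'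
    have hxsplit : x * x ^ (p-2) = x ^ (2*p - s*p - 3) * x ^ (2 + s*p - p) := by
      nth_rewrite 1 [← Real.rpow_one x]
      rw [← Real.rpow_add hx0, ← Real.rpow_add hx0]
      congr 1
      ring
    have hdiv : x * x ^ (p-2) / x ^ (2 + s*p - p) = x ^ (2*p - s*p - 3) := by
      rw [hxsplit, mul_div_assoc, div_self hne1, mul_one]
    have hiden : x * ((x ^ (p-2) - (3*x) ^ (p-2)) / (2*x) ^ (2 + s*p - p))
        = -C * x ^ (2*p - s*p - 3) := by
      rw [Real.mul_rpow (by norm_num : (0:ℝ) ≤ 3) hx0.le,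
        Real.mul_rpow (by norm_num : (0:ℝ) ≤ 2) hx0.le]
      have expand : x * ((x ^ (p-2) - 3 ^ (p-2) * x ^ (p-2)) /
            ((2:ℝ) ^ (2 + s*p - p) * x ^ (2 + s*p - p)))
          = -(((3:ℝ) ^ (p-2) - 1) / (2:ℝ) ^ (2 + s*p - p))
            * (x * x ^ (p-2) / x ^ (2 + s*p - p)) := by
        field_simp
        ring
      rw [expand, hdiv, hCdef]
    calc (∫ y in Set.Ioc (0:ℝ) (1/2), F y)
        ≤ ∫ y in Set.Ioc x (2*x), F y := hstep1
      _ ≤ x * ((x ^ (p-2) - (3*x) ^ (p-2)) / (2*x) ^ (2 + s*p - p)) := hstep2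
      _ = -C * x ^ (2*p - s*p - 3) := hiden
  refine ⟨⟨C, hC, hmain⟩, he_neg, ?_⟩
  -- tendsto atBot
  have h1 : Tendsto (fun x : ℝ => x ^ (2*p - s*p - 3)) (nhdsWithin 0 (Set.Ioi 0)) atTop := by
    have h0 : Tendsto (fun x : ℝ => (x⁻¹) ^ (-(2*p - s*p - 3)))
        (nhdsWithin 0 (Set.Ioi 0)) atTop :=
      (tendsto_rpow_atTop (by linarith)).comp tendsto_inv_nhdsGT_zero
    refine h0.congr' ?_
    filter_upwards [self_mem_nhdsWithin] with x hx
    rw [Real.inv_rpow (le_of_lt hx), ← Real.rpow_neg (le_of_lt hx), neg_neg]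
  have h2 : Tendsto (fun x : ℝ => -C * x ^ (2*p - s*p - 3))
      (nhdsWithin 0 (Set.Ioi 0)) atBot := by
    have hmul : Tendsto (fun x : ℝ => C * x ^ (2*p - s*p - 3))
        (nhdsWithin 0 (Set.Ioi 0)) atTop := h1.const_mul_atTop hC
    have := tendsto_neg_atBot_iff.mpr hmul
    exact this.congr fun x => by ring
  refine tendsto_atBot_mono' _ ?_ h2
  filter_upwards [Ioo_mem_nhdsGT_of_mem (show (0:ℝ) ∈ Set.Ico 0 (1/8) by constructor <;> norm_num)]
    with x hx using hmain x hx
end
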